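/- Let A be an n×n complex matrix such that A^k is entrywise nonnegative and irreducible for some integer k ≥ 1, and let λ₁ be the eigenvalue of A with λ₁^k = ρ(A)^k. Then A has a right eigenvector x > 0 and a left eigenvector y > 0 (entrywise positive real vectors) for λ₁, each unique up to scalar multiples. -/

import Mathlib

open ComplexOrder

open Matrix Complex

noncomputable def specRad {n : ℕ} (A : Matrix (Fin n) (Fin n) ℂ) : ℝ :=
  sSup ((fun z : ℂ => ‖z‖) '' spectrum ℂ A)

def MatIrred {n : ℕ} (A : Matrix (Fin n) (Fin n) ℂ) : Prop :=
  ∀ S : Set (Fin n), S.Nonempty → S ≠ Set.univ → ∃ i ∈ S, ∃ j ∉ S, A i j ≠ 0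

section PF

open Filter

open scoped ENNReal NNReal Topology

variable {n : ℕ}

/-- Irreducibility for real matrices. -/
def RIrred (M : Matrix (Fin n) (Fin n) ℝ) : Prop :=
  ∀ S : Set (Fin n), S.Nonempty → S ≠ Set.univ → ∃ i ∈ S, ∃ j ∉ S, M i j ≠ 0


lemma pos_of_eig (M : Matrix (Fin n) (Fin n) ℝ) (hM : ∀ i j, 0 ≤ M i j)
    (hirr : RIrred M) {u : Fin n → ℝ} (hu : ∀ i, 0 ≤ u i) (hne : u ≠ 0)
    {r : ℝ} (heig : M.mulVec u = r • u) : ∀ i, 0 < u i := by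
  by_contra h
  push_neg at h
  obtain ⟨i0, hi0⟩ := h
  have hi0 : u i0 = 0 := le_antisymm hi0 (hu i0)
  set Z : Set (Fin n) := {i | u i = 0} with hZ
  have hZne : Z.Nonempty := ⟨i0, hi0⟩
  have hZuniv : Z ≠ Set.univ := by
    intro hZu
    apply hne
    funext j
    have : j ∈ Z := hZu ▸ Set.mem_univ j
    exact this
  obtain ⟨i, hiZ, j, hjZ, hij⟩ := hirr Z hZne hZuniv
  have h1 : M.mulVec u i = 0 := by
    rw [heig]
    simp only [Pi.smul_apply, smul_eq_mul]
    rw [hiZ]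
    ring
  have h2 : 0 < M i j * u j := by
    have hMij : 0 < M i j := lt_of_le_of_ne (hM i j) (Ne.symm hij)
    have huj : 0 < u j := lt_of_le_of_ne (hu j) (Ne.symm hjZ)
    exact mul_pos hMij huj
  have h3 : M i j * u j ≤ M.mulVec u i := by
    simp only [Matrix.mulVec, dotProduct]
    exact Finset.single_le_sum (fun t _ => mul_nonneg (hM i t) (hu t)) (Finset.mem_univ j)
  linarith

lemma supp_grow_aux (M : Matrix (Fin n) (Fin n) ℝ) (hM : ∀ i j, 0 ≤ M i j)
    (hirr : RIrred M) :
    ∀ (m : ℕ) (u : Fin n → ℝ), (∀ i, 0 ≤ u i) → u ≠ 0 →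
      n ≤ m + (Finset.univ.filter (fun i => u i ≠ 0)).card →
      ∀ i, 0 < ((1 + M) ^ m).mulVec u i := by
  intro m
  induction m with
  | zero =>
    intro u hu hne hcard i
    have hsupp : (Finset.univ.filter (fun i => u i ≠ 0)) = Finset.univ := by
      apply Finset.eq_univ_of_card
      have h1 : (Finset.univ.filter (fun i => u i ≠ 0)).card ≤ (Finset.univ : Finset (Fin n)).card :=
        Finset.card_le_card (Finset.filter_subset _ _)
      simp only [Finset.card_univ, Fintype.card_fin] at h1 ⊢
      omega
    have : u i ≠ 0 := by
      have := Finset.mem_filter.mp (hsupp ▸ Finset.mem_univ i)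
      exact this.2
    simpa [Matrix.one_mulVec] using lt_of_le_of_ne (hu i) (Ne.symm this)
  | succ m ih =>
    intro u hu hne hcard i
    set u' := (1 + M).mulVec u with hu'def
    have hstep : ((1 + M) ^ (m + 1)).mulVec u = ((1 + M) ^ m).mulVec u' := by
      rw [hu'def, Matrix.mulVec_mulVec, ← pow_succ]
    have hu'eq : ∀ j, u' j = u j + M.mulVec u j := by
      intro j
      simp [hu'def, Matrix.add_mulVec, Matrix.one_mulVec]
    have hMu : ∀ j, 0 ≤ M.mulVec u j := by
      intro j
      simp only [Matrix.mulVec, dotProduct]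
      exact Finset.sum_nonneg fun t _ => mul_nonneg (hM j t) (hu t)
    have hu'0 : ∀ j, 0 ≤ u' j := fun j => by rw [hu'eq]; exact add_nonneg (hu j) (hMu j)
    have hle : ∀ j, u j ≤ u' j := fun j => by rw [hu'eq]; linarith [hMu j]
    have hsubset : (Finset.univ.filter (fun i => u i ≠ 0)) ⊆
        (Finset.univ.filter (fun i => u' i ≠ 0)) := by
      intro j hj
      simp only [Finset.mem_filter, Finset.mem_univ, true_and] at hj ⊢
      intro h0
      have : 0 < u j := lt_of_le_of_ne (hu j) (Ne.symm hj)
      have := hle j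
      nlinarith
    have hu'ne : u' ≠ 0 := by
      intro h0
      apply hne
      funext j
      show u j = 0
      have h1 : u' j = 0 := by rw [h0]; rfl
      have := hle j
      have := hu j
      linarith
    rw [hstep]
    apply ih u' hu'0 hu'ne _ i
    -- card estimate
    by_cases hcase : (Finset.univ.filter (fun i => u i ≠ 0)) = Finset.univ
    · have : (Finset.univ.filter (fun i => u' i ≠ 0)) = Finset.univ := by
        apply Finset.eq_univ_of_forall
        intro j
        have hj : u j ≠ 0 := by
          have hmem : j ∈ Finset.univ.filter (fun i => u i ≠ 0) := by
            rw [hcase]; exact Finset.mem_univ j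
          exact (Finset.mem_filter.mp hmem).2
        simp only [Finset.mem_filter, Finset.mem_univ, true_and]
        intro h0
        have h1 : 0 < u j := lt_of_le_of_ne (hu j) (Ne.symm hj)
        have h2 := hle j
        nlinarith
      rw [this]
      simp only [Finset.card_univ, Fintype.card_fin]
      omega
    · -- support is not everything; use irreducibility to find a new index
      set Z : Set (Fin n) := {j | u j = 0} with hZdef
      have hZne : Z.Nonempty := by
        by_contra hempty
        apply hcase
        apply Finset.eq_univ_of_forall
        intro j
        simp only [Finset.mem_filter, Finset.mem_univ, true_and]
        intro h0
        exact hempty ⟨j, h0⟩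
      have hZuniv : Z ≠ Set.univ := by
        intro hZu
        apply hne
        funext j
        show u j = 0
        have : j ∈ Z := hZu ▸ Set.mem_univ j
        exact this
      obtain ⟨a, haZ, b, hbZ, hab⟩ := hirr Z hZne hZuniv
      -- u a = 0, u b ≠ 0, M a b ≠ 0, so u' a > 0
      have hub : 0 < u b := lt_of_le_of_ne (hu b) (Ne.symm hbZ)
      have hMab : 0 < M a b := lt_of_le_of_ne (hM a b) (Ne.symm hab)
      have hMua : 0 < M.mulVec u a := by
        have h3 : M a b * u b ≤ M.mulVec u a := by
          simp only [Matrix.mulVec, dotProduct]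
          exact Finset.single_le_sum (fun t _ => mul_nonneg (hM a t) (hu t)) (Finset.mem_univ b)
        nlinarith
      have hu'a : u' a ≠ 0 := by
        have := hu'eq a
        have hua : u a = 0 := haZ
        intro h0
        rw [h0] at this
        rw [hua] at this
        linarith
      have hamem : a ∈ (Finset.univ.filter (fun i => u' i ≠ 0)) := by
        simp only [Finset.mem_filter, Finset.mem_univ, true_and]
        exact hu'a
      have hanot : a ∉ (Finset.univ.filter (fun i => u i ≠ 0)) := by
        simp only [Finset.mem_filter, Finset.mem_univ, true_and, not_not]
        exact haZ
      have hlt : (Finset.univ.filter (fun i => u i ≠ 0)).card <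
          (Finset.univ.filter (fun i => u' i ≠ 0)).card :=
        Finset.card_lt_card (Finset.ssubset_iff_of_subset hsubset |>.mpr ⟨a, hamem, hanot⟩)
      omega

lemma onePlus_pow_pos (M : Matrix (Fin n) (Fin n) ℝ) (hM : ∀ i j, 0 ≤ M i j)
    (hirr : RIrred M) {u : Fin n → ℝ} (hu : ∀ i, 0 ≤ u i) (hne : u ≠ 0) :
    ∀ i, 0 < ((1 + M) ^ (n - 1)).mulVec u i := by
  apply supp_grow_aux M hM hirr (n - 1) u hu hne
  have : 1 ≤ (Finset.univ.filter (fun i => u i ≠ 0)).card := by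
    have hex : ∃ j, u j ≠ 0 := by
      by_contra hc
      push_neg at hc
      exact hne (funext hc)
    obtain ⟨j, hj⟩ := hex
    apply Finset.card_pos.mpr
    exact ⟨j, by simp [hj]⟩
  omega

lemma eig_unique (M : Matrix (Fin n) (Fin n) ℝ) (hM : ∀ i j, 0 ≤ M i j)
    (hirr : RIrred M) (hn : 0 < n) {r : ℝ} {x : Fin n → ℝ} (hx : ∀ i, 0 < x i)
    (hxe : M.mulVec x = r • x) {y : Fin n → ℝ} (hye : M.mulVec y = r • y) :
    ∃ c : ℝ, y = c • x := by
  haveI : Nonempty (Fin n) := ⟨⟨0, hn⟩⟩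
  obtain ⟨i0, -, hi0⟩ := Finset.exists_min_image Finset.univ (fun i => y i / x i)
    Finset.univ_nonempty
  set c := y i0 / x i0 with hc
  refine ⟨c, ?_⟩
  set w := y - c • x with hw
  have hwapp : ∀ i, w i = y i - c * x i := fun i => rfl
  have hwnn : ∀ i, 0 ≤ w i := by
    intro i
    rw [hwapp]
    have h1 : c ≤ y i / x i := hi0 i (Finset.mem_univ i)
    have h2 := hx i
    rw [le_div_iff₀ h2] at h1
    linarith
  have hwe : M.mulVec w = r • w := by
    rw [hw, Matrix.mulVec_sub, Matrix.mulVec_smul, hxe, hye, smul_sub, smul_comm]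
  have hw0 : w i0 = 0 := by
    rw [hwapp, hc, div_mul_cancel₀ _ (ne_of_gt (hx i0)), sub_self]
  by_cases hz : w = 0
  · have : y = c • x := by
      funext i
      have : w i = 0 := by rw [hz]; rfl
      rw [hwapp] at this
      have : y i = c * x i := by linarith
      simpa using this
    exact this
  · exact absurd hw0 (ne_of_gt (pos_of_eig M hM hirr hwnn hz hwe i0))

lemma subinv_eq (M : Matrix (Fin n) (Fin n) ℝ) (hM : ∀ i j, 0 ≤ M i j)
    (hirr : RIrred M) (hn : 0 < n) {r : ℝ}
    (hspec : ∀ t : ℝ, (∃ v : Fin n → ℝ, (∀ i, 0 < v i) ∧ ∀ i, t * v i ≤ M.mulVec v i) → t ≤ r)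
    {u : Fin n → ℝ} (hu : ∀ i, 0 ≤ u i) (hne : u ≠ 0)
    (hsub : ∀ i, r * u i ≤ M.mulVec u i) :
    M.mulVec u = r • u := by
  haveI : Nonempty (Fin n) := ⟨⟨0, hn⟩⟩
  by_contra hne2
  set w := M.mulVec u - r • u with hwdef
  have hw0 : ∀ i, 0 ≤ w i := fun i => sub_nonneg.2 (hsub i)
  have hwne : w ≠ 0 := by
    intro h0
    apply hne2
    funext i
    have : w i = 0 := by rw [h0]; rfl
    have : M.mulVec u i - r * u i = 0 := this
    simp only [Pi.smul_apply, smul_eq_mul]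
    linarith
  set N := (1 + M) ^ (n - 1) with hN
  set v := N.mulVec u with hv
  have hvpos : ∀ i, 0 < v i := onePlus_pow_pos M hM hirr hu hne
  have hNw : ∀ i, 0 < N.mulVec w i := onePlus_pow_pos M hM hirr hw0 hwne
  have hcomm : M * N = N * M := by
    have h1 : Commute M ((1 + M) ^ (n - 1)) :=
      ((Commute.one_right M).add_right (Commute.refl M)).pow_right _
    exact h1
  have hkey : ∀ i, M.mulVec v i - r * v i = N.mulVec w i := by
    intro i
    have h1 : M.mulVec v = N.mulVec (M.mulVec u) := by
      rw [hv, Matrix.mulVec_mulVec, Matrix.mulVec_mulVec, hcomm]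
    have h2 : N.mulVec w = N.mulVec (M.mulVec u) - r • N.mulVec u := by
      rw [hwdef, Matrix.mulVec_sub, Matrix.mulVec_smul]
    rw [h1, h2]
    simp [hv]
  -- t := min of ratios
  obtain ⟨i0, -, hi0⟩ := Finset.exists_min_image Finset.univ (fun i => M.mulVec v i / v i)
    Finset.univ_nonempty
  set t := M.mulVec v i0 / v i0 with ht
  have htr : r < t := by
    have h1 := hkey i0
    have h2 := hNw i0
    have h3 := hvpos i0
    rw [ht, lt_div_iff₀ h3]
    linarith
  have hle : t ≤ r := by
    apply hspec t
    refine ⟨v, hvpos, fun i => ?_⟩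
    have h1 : t ≤ M.mulVec v i / v i := hi0 i (Finset.mem_univ i)
    rw [le_div_iff₀ (hvpos i)] at h1
    linarith
  linarith

lemma map_ofReal_pow (M : Matrix (Fin n) (Fin n) ℝ) (m : ℕ) :
    (M.map Complex.ofReal) ^ m = (M ^ m).map Complex.ofReal := by
  have h : ∀ N : Matrix (Fin n) (Fin n) ℝ, N.map Complex.ofReal =
      Complex.ofRealHom.mapMatrix N := fun N => rfl
  rw [h, h, ← map_pow]

lemma mulVec_ofReal (M : Matrix (Fin n) (Fin n) ℝ) (v : Fin n → ℝ) :
    (M.map Complex.ofReal).mulVec (fun i => (v i : ℂ)) = fun i => ((M.mulVec v i : ℝ) : ℂ) := by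
  funext i
  simp only [Matrix.mulVec, dotProduct, Matrix.map_apply]
  norm_cast

lemma spec_bound (hn : 0 < n) (M : Matrix (Fin n) (Fin n) ℝ) (hM : ∀ i j, 0 ≤ M i j)
    {r t : ℝ} (hr0 : 0 ≤ r) (ht : 0 ≤ t)
    (hrad : spectralRadius ℂ (M.map Complex.ofReal) ≤ ENNReal.ofReal r)
    (v : Fin n → ℝ) (hv : ∀ i, 0 < v i) (hsub : ∀ i, t * v i ≤ M.mulVec v i) : t ≤ r := by
  haveI : Nonempty (Fin n) := ⟨⟨0, hn⟩⟩
  letI : NormedRing (Matrix (Fin n) (Fin n) ℂ) := Matrix.linftyOpNormedRing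
  letI : NormedAlgebra ℂ (Matrix (Fin n) (Fin n) ℂ) := Matrix.linftyOpNormedAlgebra
  haveI : CompleteSpace (Matrix (Fin n) (Fin n) ℂ) := FiniteDimensional.complete ℂ _
  set B := M.map Complex.ofReal with hB
  -- iterate the inequality
  have hMv : ∀ m : ℕ, ∀ i, t ^ m * v i ≤ (M ^ m).mulVec v i := by
    intro m
    induction m with
    | zero => intro i; simp [Matrix.one_mulVec]
    | succ m ih =>
      intro i
      have h1 : (M ^ (m + 1)).mulVec v = M.mulVec ((M ^ m).mulVec v) := by
        rw [Matrix.mulVec_mulVec, ← pow_succ']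
      rw [h1]
      have h2 : ∀ j, t ^ m * v j ≤ (M ^ m).mulVec v j := ih
      have h3 : M.mulVec (fun j => t ^ m * v j) i ≤ M.mulVec ((M ^ m).mulVec v) i := by
        simp only [Matrix.mulVec, dotProduct]
        exact Finset.sum_le_sum fun j _ => mul_le_mul_of_nonneg_left (h2 j) (hM i j)
      have h4 : M.mulVec (fun j => t ^ m * v j) i = t ^ m * M.mulVec v i := by
        simp only [Matrix.mulVec, dotProduct, Finset.mul_sum]
        exact Finset.sum_congr rfl fun j _ => by ring
      have h5 : t * v i ≤ M.mulVec v i := hsub i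
      calc t ^ (m + 1) * v i = t ^ m * (t * v i) := by ring
        _ ≤ t ^ m * M.mulVec v i := by
            exact mul_le_mul_of_nonneg_left h5 (pow_nonneg ht m)
        _ = M.mulVec (fun j => t ^ m * v j) i := h4.symm
        _ ≤ _ := h3
  -- the complex vector
  set vc : Fin n → ℂ := fun i => (v i : ℂ) with hvc
  obtain ⟨i0, -, hi0⟩ := Finset.exists_mem_eq_sup (Finset.univ : Finset (Fin n))
    Finset.univ_nonempty (fun i => ‖vc i‖₊)
  have hnvc : ‖vc‖ = v i0 := by
    rw [Pi.norm_def, hi0]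
    simp [hvc, Complex.norm_real, abs_of_pos (hv i0)]
  have hvcpos : 0 < ‖vc‖ := by rw [hnvc]; exact hv i0
  -- norm bound
  have hnorm : ∀ m : ℕ, t ^ m ≤ ‖B ^ m‖ := by
    intro m
    have h1 : (B ^ m).mulVec vc = fun i => (((M ^ m).mulVec v i : ℝ) : ℂ) := by
      rw [hB, map_ofReal_pow, mulVec_ofReal]
    have h2 : t ^ m * ‖vc‖ ≤ ‖(B ^ m).mulVec vc‖ := by
      have h3 : ‖((B ^ m).mulVec vc) i0‖ ≤ ‖(B ^ m).mulVec vc‖ := norm_le_pi_norm _ i0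
      have h4 : ‖((B ^ m).mulVec vc) i0‖ = |(M ^ m).mulVec v i0| := by
        rw [h1]; simp [Complex.norm_real]
      have h5 : t ^ m * v i0 ≤ (M ^ m).mulVec v i0 := hMv m i0
      have h6 : (M ^ m).mulVec v i0 ≤ |(M ^ m).mulVec v i0| := le_abs_self _
      rw [hnvc]
      linarith [h3, h4 ▸ h3]
    have h7 : ‖(B ^ m).mulVec vc‖ ≤ ‖B ^ m‖ * ‖vc‖ :=
      Matrix.linfty_opNorm_mulVec _ _
    have := le_trans h2 h7
    exact le_of_mul_le_mul_right (by linarith) hvcpos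
  -- pass to the limit via Gelfand's formula
  have hgelfand := spectrum.pow_nnnorm_pow_one_div_tendsto_nhds_spectralRadius B
  have hlb : ENNReal.ofReal t ≤ spectralRadius ℂ B := by
    apply ge_of_tendsto hgelfand
    filter_upwards [eventually_ge_atTop 1] with m hm
    have h1 : ENNReal.ofReal (t ^ m) ≤ (‖B ^ m‖₊ : ℝ≥0∞) := by
      rw [show ((‖B ^ m‖₊ : ℝ≥0∞)) = ENNReal.ofReal ‖B ^ m‖ from (ofReal_norm _).symm]
      exact ENNReal.ofReal_le_ofReal (hnorm m)
    have h2 : ENNReal.ofReal (t ^ m) = (ENNReal.ofReal t) ^ m := ENNReal.ofReal_pow ht m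
    have h3 : ((ENNReal.ofReal t) ^ m) ^ (1 / (m : ℝ)) ≤ ((‖B ^ m‖₊ : ℝ≥0∞)) ^ (1 / (m : ℝ)) := by
      apply ENNReal.rpow_le_rpow _ (by positivity)
      rw [← h2]; exact h1
    have h4 : ((ENNReal.ofReal t) ^ m) ^ (1 / (m : ℝ)) = ENNReal.ofReal t := by
      rw [← ENNReal.rpow_natCast (ENNReal.ofReal t) m, ← ENNReal.rpow_mul]
      have hm0 : (m : ℝ) ≠ 0 := Nat.cast_ne_zero.mpr (by omega)
      rw [mul_one_div_cancel hm0]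
      exact ENNReal.rpow_one _
    rw [← h4]
    exact h3
  have := le_trans hlb hrad
  exact (ENNReal.ofReal_le_ofReal_iff hr0).mp this

lemma key {n : ℕ} (A : Matrix (Fin n) (Fin n) ℂ) (k : ℕ) (hk : 1 ≤ k)
    (hnonneg : ∀ i j, 0 ≤ (A ^ k) i j) (hirr : MatIrred (A ^ k))
    (lam : ℂ) (hlam : lam ∈ spectrum ℂ A) (hlamk : lam ^ k = ((specRad A : ℂ)) ^ k) :
    ∃ x : Fin n → ℝ, (∀ i, 0 < x i) ∧
      A.mulVec (fun i => (x i : ℂ)) = lam • (fun i => (x i : ℂ)) ∧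
      ∀ z : Fin n → ℂ, A.mulVec z = lam • z → ∃ c : ℂ, z = c • (fun i => (x i : ℂ)) := by
  -- n is positive
  have hn : 0 < n := by
    rcases Nat.eq_zero_or_pos n with h0 | h; swap
    · exact h
    · exfalso
      subst h0
      haveI : Subsingleton (Matrix (Fin 0) (Fin 0) ℂ) :=
        ⟨fun a b => funext fun i => i.elim0⟩
      exact spectrum.mem_iff.mp hlam (isUnit_of_subsingleton _)
  haveI : Nonempty (Fin n) := ⟨⟨0, hn⟩⟩
  -- basic spectrum facts
  set s := specRad A with hs
  have hfin : (spectrum ℂ A).Finite := Matrix.finite_spectrum A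
  have hbdd : BddAbove ((fun z : ℂ => ‖z‖) '' spectrum ℂ A) := (hfin.image _).bddAbove
  have habs_le : ∀ μ ∈ spectrum ℂ A, ‖μ‖ ≤ s :=
    fun μ h => le_csSup hbdd ⟨μ, h, rfl⟩
  have hs0 : 0 ≤ s := le_trans (norm_nonneg lam) (habs_le lam hlam)
  set r := s ^ k with hr
  have hr0 : 0 ≤ r := pow_nonneg hs0 k
  have hrc : (lam : ℂ) ^ k = ((r : ℝ) : ℂ) := by rw [hlamk, hr]; push_cast; ring
  -- eigenvector of A for lam
  have hzex : ∃ z : Fin n → ℂ, z ≠ 0 ∧ A.mulVec z = lam • z := by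
    have h1 : ¬IsUnit (algebraMap ℂ (Matrix (Fin n) (Fin n) ℂ) lam - A) :=
      spectrum.mem_iff.mp hlam
    have h2 : (algebraMap ℂ (Matrix (Fin n) (Fin n) ℂ) lam - A).det = 0 := by
      by_contra hdet
      exact h1 ((Matrix.isUnit_iff_isUnit_det _).mpr (isUnit_iff_ne_zero.mpr hdet))
    obtain ⟨z, hz0, hz⟩ := (Matrix.exists_mulVec_eq_zero_iff).mpr h2
    refine ⟨z, hz0, ?_⟩
    have h3 : (algebraMap ℂ (Matrix (Fin n) (Fin n) ℂ) lam) = lam • (1 : Matrix (Fin n) (Fin n) ℂ) := by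
      rw [Algebra.algebraMap_eq_smul_one]
    rw [h3, Matrix.sub_mulVec, Matrix.smul_mulVec, Matrix.one_mulVec, sub_eq_zero] at hz
    exact hz.symm
  obtain ⟨z, hz0, hz⟩ := hzex
  -- powers
  have hpowvec : ∀ (w : Fin n → ℂ), A.mulVec w = lam • w →
      ∀ m : ℕ, (A ^ m).mulVec w = lam ^ m • w := by
    intro w hw m
    induction m with
    | zero => simp [Matrix.one_mulVec]
    | succ m ih =>
      have h1 : (A ^ (m + 1)).mulVec w = (A ^ m).mulVec (A.mulVec w) := by
        rw [Matrix.mulVec_mulVec, ← pow_succ]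
      rw [h1, hw, Matrix.mulVec_smul, ih, smul_smul, ← pow_succ']
  -- the real matrix M
  set B := A ^ k with hBdef
  set M : Matrix (Fin n) (Fin n) ℝ := Matrix.of (fun i j => (B i j).re) with hMdef
  have hMapp : ∀ i j, M i j = (B i j).re := fun i j => rfl
  have him : ∀ i j, (B i j).im = 0 := by
    intro i j
    have := hnonneg i j
    rw [Complex.le_def] at this
    exact this.2.symm
  have hM : ∀ i j, 0 ≤ M i j := by
    intro i j
    have := hnonneg i j
    rw [Complex.le_def] at this
    simpa [hMapp] using this.1
  have hBM : B = M.map Complex.ofReal := by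
    funext i j
    apply Complex.ext
    · simp [Matrix.map_apply, hMapp]
    · simp [Matrix.map_apply, him i j]
  have hirrM : RIrred M := by
    intro S hS1 hS2
    obtain ⟨i, hi, j, hj, hij⟩ := hirr S hS1 hS2
    refine ⟨i, hi, j, hj, ?_⟩
    intro h0
    apply hij
    apply Complex.ext
    · simpa [hMapp] using h0
    · simp [him i j]
  -- B z = r z
  have hBz : B.mulVec z = ((r : ℝ) : ℂ) • z := by
    rw [hBdef, hpowvec z hz k, hrc]
  -- u = |z|
  set u : Fin n → ℝ := fun i => ‖z i‖ with hu_def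
  have hu : ∀ i, 0 ≤ u i := fun i => norm_nonneg _
  have hune : u ≠ 0 := by
    intro h0
    apply hz0
    funext i
    have : u i = 0 := by rw [h0]; rfl
    exact norm_eq_zero.mp this
  -- subinvariance
  have hsub : ∀ i, r * u i ≤ M.mulVec u i := by
    intro i
    have h1 : ‖B.mulVec z i‖ = r * u i := by
      rw [hBz]
      simp only [Pi.smul_apply, smul_eq_mul]
      rw [norm_mul, Complex.norm_real, Real.norm_of_nonneg hr0]
    have h2 : ‖B.mulVec z i‖ ≤ ∑ j, ‖B i j * z j‖ := by
      simp only [Matrix.mulVec, dotProduct]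
      exact norm_sum_le _ _
    have h3 : ∀ j, ‖B i j * z j‖ = M i j * u j := by
      intro j
      rw [norm_mul]
      congr 1
      rw [hBM, Matrix.map_apply, Complex.norm_real]
      exact Real.norm_of_nonneg (hM i j)
    have h4 : ∑ j, ‖B i j * z j‖ = M.mulVec u i := by
      simp only [Matrix.mulVec, dotProduct]
      exact Finset.sum_congr rfl fun j _ => h3 j
    rw [← h1]
    rw [h4] at h2
    exact h2
  -- spectral radius upper bound for B
  have hrad : spectralRadius ℂ (M.map Complex.ofReal) ≤ ENNReal.ofReal r := by
    rw [← hBM]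
    rw [spectralRadius]
    apply iSup₂_le
    intro μ hμ
    have hmap : spectrum ℂ B = (· ^ k) '' spectrum ℂ A := by
      rw [hBdef]
      exact spectrum.map_pow_of_pos A hk
    rw [hmap] at hμ
    obtain ⟨ν, hν, hνμ⟩ := hμ
    have h1 : ‖μ‖ ≤ r := by
      rw [← hνμ]
      have : ‖ν ^ k‖ = ‖ν‖ ^ k := by
        rw [norm_pow]
      rw [this, hr]
      exact pow_le_pow_left₀ (norm_nonneg _) (habs_le ν hν) k
    rw [show ((‖μ‖₊ : ℝ≥0∞)) = ENNReal.ofReal ‖μ‖ from (ofReal_norm _).symm]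
    exact ENNReal.ofReal_le_ofReal h1
  -- the spectral hypothesis
  have hspec : ∀ t : ℝ, (∃ v : Fin n → ℝ, (∀ i, 0 < v i) ∧ ∀ i, t * v i ≤ M.mulVec v i) → t ≤ r := by
    intro t ⟨v, hv, hsubv⟩
    rcases le_or_gt t 0 with h | h
    · linarith
    · exact spec_bound hn M hM hr0 h.le hrad v hv hsubv
  -- equality and positivity
  have heq : M.mulVec u = r • u := subinv_eq M hM hirrM hn hspec hu hune hsub
  have hupos : ∀ i, 0 < u i := pos_of_eig M hM hirrM hu hune heq
  -- complex simplicity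
  have csimp : ∀ z' : Fin n → ℂ, B.mulVec z' = ((r : ℝ) : ℂ) • z' →
      ∃ c : ℂ, z' = c • (fun i => (u i : ℂ)) := by
    intro z' hz'
    set zr : Fin n → ℝ := fun i => (z' i).re with hzr
    set zi : Fin n → ℝ := fun i => (z' i).im with hzi
    have hre : M.mulVec zr = r • zr := by
      funext i
      have h1 := congrFun hz' i
      have h2 : (B.mulVec z' i).re = M.mulVec zr i := by
        simp only [Matrix.mulVec, dotProduct, Complex.re_sum]
        apply Finset.sum_congr rfl
        intro j _
        rw [Complex.mul_re, him i j, hMapp]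
        ring
      have h3 : ((((r : ℝ) : ℂ)) • z' i).re = r * zr i := by
        show ((((r : ℝ) : ℂ)) * z' i).re = r * (z' i).re
        simp [Complex.mul_re]
      rw [← h2, h1]
      simpa using h3
    have himp : M.mulVec zi = r • zi := by
      funext i
      have h1 := congrFun hz' i
      have h2 : (B.mulVec z' i).im = M.mulVec zi i := by
        simp only [Matrix.mulVec, dotProduct, Complex.im_sum]
        apply Finset.sum_congr rfl
        intro j _
        rw [Complex.mul_im, him i j, hMapp]
        ring
      have h3 : ((((r : ℝ) : ℂ)) • z' i).im = r * zi i := by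
        show ((((r : ℝ) : ℂ)) * z' i).im = r * (z' i).im
        simp [Complex.mul_im]
      rw [← h2, h1]
      simpa using h3
    obtain ⟨a, ha⟩ := eig_unique M hM hirrM hn hupos heq hre
    obtain ⟨b, hb⟩ := eig_unique M hM hirrM hn hupos heq himp
    refine ⟨(a : ℂ) + (b : ℂ) * Complex.I, ?_⟩
    funext i
    have ha' : (z' i).re = a * u i := by
      rw [show (z' i).re = zr i from rfl, ha]; rfl
    have hb' : (z' i).im = b * u i := by
      rw [show (z' i).im = zi i from rfl, hb]; rfl
    simp only [Pi.smul_apply, smul_eq_mul]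
    apply Complex.ext
    · simp [Complex.add_re, Complex.mul_re, ha']
    · simp [Complex.add_im, Complex.mul_im, hb']
  -- A fixes the direction of u
  obtain ⟨c', hc'⟩ := csimp z hBz
  have hc'0 : c' ≠ 0 := by
    intro h0
    apply hz0
    rw [hc', h0, zero_smul]
  have hAu : A.mulVec (fun i => (u i : ℂ)) = lam • (fun i => (u i : ℂ)) := by
    have h1 : A.mulVec z = A.mulVec (c' • fun i => (u i : ℂ)) := by rw [← hc']
    rw [Matrix.mulVec_smul] at h1
    have h2 : lam • z = c' • (lam • fun i => (u i : ℂ)) := by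
      rw [hc', smul_comm]
    rw [hz] at h1
    rw [h2] at h1
    exact smul_right_injective _ hc'0 h1.symm
  refine ⟨u, hupos, hAu, ?_⟩
  intro z'' hz''
  apply csimp
  rw [hBdef, hpowvec z'' hz'' k, hrc]

lemma spectrum_transpose {n : ℕ} (A : Matrix (Fin n) (Fin n) ℂ) :
    spectrum ℂ Aᵀ = spectrum ℂ A := by
  ext μ
  simp only [spectrum.mem_iff]
  have h : ∀ B : Matrix (Fin n) (Fin n) ℂ,
      IsUnit B ↔ B.det ≠ 0 := by
    intro B
    rw [Matrix.isUnit_iff_isUnit_det, isUnit_iff_ne_zero]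
  rw [not_iff_not, h, h]
  have heq : (algebraMap ℂ (Matrix (Fin n) (Fin n) ℂ) μ - Aᵀ) =
      (algebraMap ℂ (Matrix (Fin n) (Fin n) ℂ) μ - A)ᵀ := by
    simp [Algebra.algebraMap_eq_smul_one, Matrix.transpose_sub, Matrix.transpose_smul,
      Matrix.transpose_one]
  rw [heq, Matrix.det_transpose]

end PF

theorem stmt_2 {n : ℕ} (A : Matrix (Fin n) (Fin n) ℂ) (k : ℕ) (hk : 1 ≤ k)
    (hnonneg : ∀ i j, 0 ≤ (A ^ k) i j) (hirr : MatIrred (A ^ k))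
    (lam : ℂ) (hlam : lam ∈ spectrum ℂ A) (hlamk : lam ^ k = ((specRad A : ℂ)) ^ k) :
    (∃ x : Fin n → ℝ, (∀ i, 0 < x i) ∧
      A.mulVec (fun i => (x i : ℂ)) = lam • (fun i => (x i : ℂ)) ∧
      ∀ z : Fin n → ℂ, A.mulVec z = lam • z → ∃ c : ℂ, z = c • (fun i => (x i : ℂ))) ∧
    (∃ y : Fin n → ℝ, (∀ i, 0 < y i) ∧
      Matrix.vecMul (fun i => (y i : ℂ)) A = lam • (fun i => (y i : ℂ)) ∧
      ∀ w : Fin n → ℂ, Matrix.vecMul w A = lam • w → ∃ c : ℂ, w = c • (fun i => (y i : ℂ))) := by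
  constructor
  · exact key A k hk hnonneg hirr lam hlam hlamk
  · -- apply key to the transpose
    have hTpow : (Aᵀ) ^ k = (A ^ k)ᵀ := (Matrix.transpose_pow A k).symm
    have hnonnegT : ∀ i j, 0 ≤ ((Aᵀ) ^ k) i j := by
      intro i j
      rw [hTpow]
      exact hnonneg j i
    have hirrT : MatIrred ((Aᵀ) ^ k) := by
      intro S hS1 hS2
      have hSc1 : Sᶜ.Nonempty := by
        rcases Set.nonempty_compl.mpr hS2 with h
        exact h
      have hSc2 : Sᶜ ≠ Set.univ := by
        intro h
        obtain ⟨i, hi⟩ := hS1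
        have : i ∈ Sᶜ := h ▸ Set.mem_univ i
        exact this hi
      obtain ⟨i, hi, j, hj, hij⟩ := hirr Sᶜ hSc1 hSc2
      refine ⟨j, Set.notMem_compl_iff.mp hj, i, hi, ?_⟩
      rw [hTpow]
      simpa [Matrix.transpose_apply] using hij
    have hlamT : lam ∈ spectrum ℂ Aᵀ := (spectrum_transpose A) ▸ hlam
    have hsrT : specRad Aᵀ = specRad A := by
      unfold specRad
      rw [spectrum_transpose]
    obtain ⟨y, hy1, hy2, hy3⟩ := key Aᵀ k hk hnonnegT hirrT lam hlamT (by rw [hsrT]; exact hlamk)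
    refine ⟨y, hy1, ?_, ?_⟩
    · rw [← Matrix.mulVec_transpose]
      exact hy2
    · intro w hw
      apply hy3
      rw [Matrix.mulVec_transpose]
      exact hw
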